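/- Grönwall estimate for the spatial gradient of the flow: let d ≥ 2, γ ∈ (0,1), q > 0, T > 0 and let D₀ ⊂ ℝ^d be open. Let v : ℝ^d × [0,T] → ℝ^d be continuous, and X : ℝ^d × [0,T] → ℝ^d satisfy X(α,t) = α + ∫_0^t v(X(α,τ),τ) dτ for all α, t. Assume that for each τ ∈ [0,T]: v(·,τ) is differentiable with ‖∇v(x,τ)‖ ≤ q for all x, and ‖∇v(x₁,τ) - ∇v(x₂,τ)‖ ≤ q |x₁-x₂|^γ whenever x₁, x₂ ∈ X(D₀,τ); assume also that X(·,τ) is differentiable on D₀ and its derivative satisfies ∇X(α,t) = I + ∫_0^t ∇v(X(α,τ),τ) ∘ ∇X(α,τ) dτ for α ∈ D₀. Then for every α, β ∈ D₀ and t ∈ [0,T]: ‖∇X(α,t)‖ ≤ e^{qt} and ‖∇X(α,t) - ∇X(β,t)‖ ≤ (1/γ) e^{q(γ+1)t} |α-β|^γ. -/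

import Mathlib

open MeasureTheory Metric Set intervalIntegral

lemma my_gron (K δ : ℝ) (hK : 0 ≤ K) (u f : ℝ → ℝ) (hu : Continuous u) (hf : Continuous f)
    (t : ℝ) (ht : 0 ≤ t)
    (h : ∀ s ∈ Set.Icc 0 t, u s ≤ δ + ∫ r in (0:ℝ)..s, (K * u r + f r)) :
    u t ≤ Real.exp (K * t) * (δ + ∫ s in (0:ℝ)..t, Real.exp (-(K * s)) * f s) := by
  set g : ℝ → ℝ := fun r => K * u r + f r with hg
  have hgc : Continuous g := by continuity
  set φ : ℝ → ℝ := fun s => δ + ∫ r in (0:ℝ)..s, g r with hφ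
  have hφd : ∀ s : ℝ, HasDerivAt φ (g s) s := by
    intro s
    have := intervalIntegral.integral_hasDerivAt_right
      (hgc.intervalIntegrable 0 s) (hgc.stronglyMeasurable.stronglyMeasurableAtFilter)
      (hgc.continuousAt (x := s))
    simpa [hφ] using (this.const_add δ)
  set h2 : ℝ → ℝ := fun s => Real.exp (-(K * s)) * f s with hh2
  have hh2c : Continuous h2 := by continuity
  set ψ : ℝ → ℝ := fun s => Real.exp (-(K * s)) * φ s - ∫ r in (0:ℝ)..s, h2 r with hψ
  have hψd : ∀ s : ℝ, HasDerivAt ψ (K * Real.exp (-(K * s)) * (u s - φ s)) s := by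
    intro s
    have h1 : HasDerivAt (fun s => Real.exp (-(K * s))) (-K * Real.exp (-(K * s))) s := by
      have : HasDerivAt (fun s : ℝ => -(K * s)) (-K) s := by
        have h := ((hasDerivAt_id s).const_mul K).neg
        simp only [mul_one] at h
        exact h
      simpa [mul_comm] using this.exp
    have h3 := (h1.mul (hφd s))
    have h4 : HasDerivAt (fun s => ∫ r in (0:ℝ)..s, h2 r) (h2 s) s :=
      intervalIntegral.integral_hasDerivAt_right
        (hh2c.intervalIntegrable 0 s) (hh2c.stronglyMeasurable.stronglyMeasurableAtFilter)
        (hh2c.continuousAt (x := s))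
    have := h3.sub h4
    refine HasDerivAt.congr_deriv this ?_
    simp only [h2, g]
    ring
  have hmono : AntitoneOn ψ (Set.Icc 0 t) := by
    apply antitoneOn_of_deriv_nonpos (convex_Icc 0 t)
    · exact Continuous.continuousOn (by fun_prop)
    · intro s _; exact (hψd s).differentiableAt.differentiableWithinAt
    · intro s hs
      rw [interior_Icc] at hs
      rw [(hψd s).deriv]
      have hus : u s ≤ φ s := h s ⟨le_of_lt hs.1, le_of_lt hs.2⟩
      have : u s - φ s ≤ 0 := by linarith
      have h5 : K * Real.exp (-(K * s)) * (u s - φ s) ≤ 0 :=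
        mul_nonpos_of_nonneg_of_nonpos
          (mul_nonneg hK (Real.exp_nonneg (-(K * s)))) this
      exact h5
  have hψt : ψ t ≤ ψ 0 := hmono ⟨le_refl 0, ht⟩ ⟨ht, le_refl t⟩ ht
  have hψ0 : ψ 0 = δ := by simp [hψ, hφ]
  have hut : u t ≤ φ t := h t ⟨ht, le_refl t⟩
  have key : Real.exp (-(K * t)) * φ t ≤ δ + ∫ r in (0:ℝ)..t, h2 r := by
    have : ψ t ≤ δ := hψ0 ▸ hψt
    simp only [hψ] at this; linarith
  have hpos : (0:ℝ) < Real.exp (-(K * t)) := Real.exp_pos _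
  calc u t ≤ φ t := hut
    _ = Real.exp (K * t) * (Real.exp (-(K * t)) * φ t) := by
        rw [← mul_assoc, ← Real.exp_add]; simp
    _ ≤ Real.exp (K * t) * (δ + ∫ r in (0:ℝ)..t, h2 r) := by
        apply mul_le_mul_of_nonneg_left key (Real.exp_nonneg _)

lemma my_gronOn (K δ : ℝ) (hK : 0 ≤ K) (u f : ℝ → ℝ) (t : ℝ) (ht : 0 ≤ t)
    (hu : ContinuousOn u (Set.Icc 0 t)) (hf : Continuous f)
    (h : ∀ s ∈ Set.Icc 0 t, u s ≤ δ + ∫ r in (0:ℝ)..s, (K * u r + f r)) :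
    u t ≤ Real.exp (K * t) * (δ + ∫ s in (0:ℝ)..t, Real.exp (-(K * s)) * f s) := by
  set proj : ℝ → ℝ := fun s => max 0 (min s t) with hproj
  have hprojc : Continuous proj := by fun_prop
  have hmem : ∀ s, proj s ∈ Set.Icc 0 t := fun s =>
    ⟨le_max_left _ _, max_le ht (min_le_right _ _)⟩
  have hprojeq : ∀ s ∈ Set.Icc 0 t, proj s = s := by
    intro s hs
    simp [hproj, min_eq_left hs.2, max_eq_right hs.1]
  set u' : ℝ → ℝ := fun s => u (proj s) with hu'
  have hu'c : Continuous u' := hu.comp_continuous hprojc hmem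
  have key : ∀ s ∈ Set.Icc 0 t, u' s = u s := by
    intro s hs
    show u (proj s) = u s
    rw [hprojeq s hs]
  have h' : ∀ s ∈ Set.Icc 0 t, u' s ≤ δ + ∫ r in (0:ℝ)..s, (K * u' r + f r) := by
    intro s hs
    rw [key s hs]
    have : (∫ r in (0:ℝ)..s, (K * u' r + f r)) = ∫ r in (0:ℝ)..s, (K * u r + f r) := by
      apply intervalIntegral.integral_congr
      intro r hr
      rw [Set.uIcc_of_le hs.1] at hr
      have := key r (Set.Icc_subset_Icc_right hs.2 hr)
      simp only [this]
    rw [this]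
    exact h s hs
  have := my_gron K δ hK u' f hu'c hf t ht h'
  rwa [key t ⟨ht, le_refl t⟩] at this

lemma my_union_int {B : Type*} [NormedAddCommGroup B] (g : ℝ → B) (s : ℕ → Set ℝ)
    (U : Set ℝ) (hU : U = ⋃ n, s n) (hm : ∀ n, IntegrableOn g (s n)) (C : ℝ)
    (hmeasU : MeasurableSet U) (hUfin : volume U < ⊤)
    (hbound : ∀ x ∈ U, ‖g x‖ ≤ C) : IntegrableOn g U := by
  have hae : AEStronglyMeasurable g (volume.restrict U) := by
    rw [hU]
    exact (aestronglyMeasurable_iUnion_iff).mpr fun n => (hm n).aestronglyMeasurable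
  refine Integrable.mono' (g := fun _ => C) ((integrableOn_const_iff (C := C)).mpr (Or.inr hUfin)) hae ?_
  exact (ae_restrict_iff' hmeasU).mpr (Filter.Eventually.of_forall hbound)

lemma my_boot {B : Type*} [NormedAddCommGroup B] [NormedSpace ℝ B] [CompleteSpace B]
    (T a b : ℝ) (hT : 0 < T) (ha : 0 ≤ a) (hb : 0 ≤ b)
    (Y g : ℝ → B) (Y0 : B)
    (heq : ∀ t ∈ Set.Icc (0:ℝ) T, Y t = Y0 + ∫ τ in (0:ℝ)..t, g τ)
    (hbound : ∀ s ∈ Set.Icc (0:ℝ) T, ‖g s‖ ≤ a + b * ‖Y s‖)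
    (hint : ∀ s t : ℝ, 0 ≤ s → s ≤ t → t ≤ T → ContinuousOn Y (Set.Icc s t) →
      IntegrableOn g (Set.Icc s t)) :
    IntegrableOn g (Set.Icc 0 T) := by
  have hsing : ∀ x : ℝ, IntegrableOn g {x} := by
    intro x
    exact (integrableOn_singleton_iff).mpr (Or.inr (by simp))
  set S : Set ℝ := {t | t ∈ Set.Icc 0 T ∧ IntegrableOn g (Set.Icc 0 t)} with hS
  have h0S : (0:ℝ) ∈ S := ⟨⟨le_refl 0, hT.le⟩, by rw [Set.Icc_self]; exact hsing 0⟩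
  have hne : S.Nonempty := ⟨0, h0S⟩
  have hbdd : BddAbove S := ⟨T, fun x hx => hx.1.2⟩
  set c := sSup S with hc
  have hc0 : 0 ≤ c := le_csSup hbdd h0S
  have hcT : c ≤ T := csSup_le hne fun x hx => hx.1.2
  have hYcont : ∀ t ∈ S, ContinuousOn Y (Set.Icc 0 t) := by
    intro t htS
    have hII : IntervalIntegrable g volume 0 t :=
      (intervalIntegrable_iff_integrableOn_Icc_of_le htS.1.1).mpr htS.2
    have hprim := intervalIntegral.continuousOn_primitive_interval' hII
      (Set.left_mem_uIcc (a := (0:ℝ)) (b := t))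
    rw [Set.uIcc_of_le htS.1.1] at hprim
    exact (continuousOn_const.add hprim).congr
      (fun s hs => heq s (Set.Icc_subset_Icc_right htS.1.2 hs))
  set C := Real.exp (b * T) * (‖Y0‖ + a * T) with hCdef
  have hYb : ∀ t ∈ S, ∀ s ∈ Set.Icc 0 t, ‖Y s‖ ≤ C := by
    intro t htS s hs
    have hsT : Set.Icc (0:ℝ) s ⊆ Set.Icc 0 T :=
      Set.Icc_subset_Icc_right (hs.2.trans htS.1.2)
    have hst : Set.Icc (0:ℝ) s ⊆ Set.Icc 0 t := Set.Icc_subset_Icc_right hs.2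
    have hucont : ContinuousOn (fun r => ‖Y r‖) (Set.Icc 0 s) :=
      ((hYcont t htS).mono hst).norm
    have hkey : ∀ r ∈ Set.Icc 0 s, ‖Y r‖ ≤ ‖Y0‖
        + ∫ r' in (0:ℝ)..r, (b * ‖Y r'‖ + (fun _ : ℝ => a) r') := by
      intro r hr
      have hrT : r ∈ Set.Icc 0 T := hsT hr
      have h1 : ‖Y r‖ ≤ ‖Y0‖ + ‖∫ τ in (0:ℝ)..r, g τ‖ := by
        rw [heq r hrT]; exact norm_add_le _ _
      have h2 : ‖∫ τ in (0:ℝ)..r, g τ‖ ≤ ∫ τ in (0:ℝ)..r, ‖g τ‖ :=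
        intervalIntegral.norm_integral_le_integral_norm hr.1
      have hgi : IntervalIntegrable (fun τ => ‖g τ‖) volume 0 r :=
        ((intervalIntegrable_iff_integrableOn_Icc_of_le hr.1).mpr
          (htS.2.mono_set (Set.Icc_subset_Icc_right (hr.2.trans hs.2)))).norm
      have hui : IntervalIntegrable (fun r' => b * ‖Y r'‖ + a) volume 0 r := by
        apply ContinuousOn.intervalIntegrable
        rw [Set.uIcc_of_le hr.1]
        exact ((hucont.mono (Set.Icc_subset_Icc_right hr.2)).const_smul b).add
          continuousOn_const
      have h3 : (∫ τ in (0:ℝ)..r, ‖g τ‖) ≤ ∫ r' in (0:ℝ)..r, (b * ‖Y r'‖ + a) := by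
        apply intervalIntegral.integral_mono_on hr.1 hgi hui
        intro x hx
        have := hbound x (Set.Icc_subset_Icc_right (hr.2.trans (hs.2.trans htS.1.2)) hx)
        linarith
      simp only []
      linarith
    have hgr := my_gronOn b ‖Y0‖ hb (fun r => ‖Y r‖) (fun _ => a) s hs.1
      hucont continuous_const hkey
    have hintle : (∫ r in (0:ℝ)..s, Real.exp (-(b * r)) * (fun _ : ℝ => a) r) ≤ a * T := by
      have hle : (∫ r in (0:ℝ)..s, Real.exp (-(b * r)) * a) ≤ ∫ r in (0:ℝ)..s, a := by
        apply intervalIntegral.integral_mono_on hs.1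
        · exact (Continuous.intervalIntegrable (by fun_prop) 0 s)
        · exact intervalIntegrable_const
        · intro x hx
          have : Real.exp (-(b * x)) ≤ 1 :=
            Real.exp_le_one_iff.mpr (neg_nonpos.mpr (mul_nonneg hb hx.1))
          calc Real.exp (-(b * x)) * a ≤ 1 * a :=
                mul_le_mul_of_nonneg_right this ha
            _ = a := one_mul a
      have : (∫ r in (0:ℝ)..s, a) = a * s := by simp [mul_comm]
      rw [this] at hle
      exact hle.trans (mul_le_mul_of_nonneg_left (hs.2.trans htS.1.2) ha)
    have hintnn : (0:ℝ) ≤ ∫ r in (0:ℝ)..s, Real.exp (-(b * r)) * (fun _ : ℝ => a) r := by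
      apply intervalIntegral.integral_nonneg hs.1
      intro x _
      exact mul_nonneg (Real.exp_nonneg _) ha
    calc ‖Y s‖ ≤ Real.exp (b * s) * (‖Y0‖ + ∫ r in (0:ℝ)..s,
          Real.exp (-(b * r)) * (fun _ : ℝ => a) r) := hgr
      _ ≤ Real.exp (b * T) * (‖Y0‖ + a * T) := by
          apply mul_le_mul
          · exact Real.exp_le_exp.mpr (mul_le_mul_of_nonneg_left (hs.2.trans htS.1.2) hb)
          · linarith
          · positivity
          · positivity
  have hIcc0c : IntegrableOn g (Set.Icc 0 c) := by
    rcases eq_or_lt_of_le hc0 with h0c | h0c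
    · rw [← h0c, Set.Icc_self]; exact hsing 0
    · have hseq : Set.Ico (0:ℝ) c = ⋃ n : ℕ, Set.Icc 0 (c - c / (n + 2)) := by
        ext x
        simp only [Set.mem_Ico, Set.mem_iUnion, Set.mem_Icc]
        constructor
        · rintro ⟨hx0, hxc⟩
          obtain ⟨n, hn⟩ := exists_nat_gt (c / (c - x))
          refine ⟨n, hx0, ?_⟩
          have hcx : 0 < c - x := by linarith
          have h2 : c / (c - x) < (n:ℝ) + 2 := by
            have : (n:ℝ) ≤ (n:ℝ) + 2 := by linarith
            linarith
          have h3 := (div_lt_iff₀ hcx).mp h2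
          have hn2 : (0:ℝ) < (n:ℝ) + 2 := by positivity
          have h4 : c / ((n:ℝ) + 2) ≤ c - x := by
            rw [div_le_iff₀ hn2]; nlinarith
          linarith
        · rintro ⟨n, hx0, hxn⟩
          have hn2 : (0:ℝ) < (n:ℝ) + 2 := by positivity
          have : 0 < c / ((n:ℝ) + 2) := div_pos h0c hn2
          exact ⟨hx0, by linarith⟩
      have hIco : IntegrableOn g (Set.Ico 0 c) := by
        refine my_union_int g (fun n => Set.Icc 0 (c - c / (n + 2))) _ hseq
          (fun n => ?_) (a + b * C) measurableSet_Ico measure_Ico_lt_top (fun x hx => ?_)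
        · 
          have hn2 : (0:ℝ) < (n:ℝ) + 2 := by positivity
          have htn : c - c / (n + 2) < c := by
            have : 0 < c / ((n:ℝ) + 2) := div_pos h0c hn2
            linarith
          obtain ⟨t', ht'S, ht'⟩ := exists_lt_of_lt_csSup hne htn
          exact ht'S.2.mono_set (Set.Icc_subset_Icc_right ht'.le)
        · obtain ⟨t', ht'S, ht'⟩ := exists_lt_of_lt_csSup hne hx.2
          have h1 := hbound x ⟨hx.1, (hx.2.le.trans hcT)⟩
          have h2 := hYb t' ht'S x ⟨hx.1, ht'.le⟩
          nlinarith
      have : Set.Icc (0:ℝ) c = Set.Ico 0 c ∪ Set.Icc c c :=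
        (Set.Ico_union_Icc_eq_Icc hc0 le_rfl).symm
      rw [this, Set.Icc_self]
      exact hIco.union (hsing c)
  have hcS : c ∈ S := ⟨⟨hc0, hcT⟩, hIcc0c⟩
  have hceq : c = T := by
    by_contra hne'
    have hclt : c < T := lt_of_le_of_ne hcT hne'
    have hconst : ∀ t ∈ Set.Ioc c T, Y t = Y0 := by
      intro t ht
      have ht0 : (0:ℝ) ≤ t := hc0.trans ht.1.le
      have htS : t ∉ S := fun h => absurd (le_csSup hbdd h) (not_le.mpr ht.1)
      have hni : ¬ IntervalIntegrable g volume 0 t := by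
        intro hII
        exact htS ⟨⟨ht0, ht.2⟩,
          (intervalIntegrable_iff_integrableOn_Icc_of_le ht0).mp hII⟩
      rw [heq t ⟨ht0, ht.2⟩, intervalIntegral.integral_undef hni, add_zero]
    have hseq2 : Set.Ioc c T = ⋃ n : ℕ, Set.Icc (c + (T - c) / (n + 2)) T := by
      ext x
      simp only [Set.mem_Ioc, Set.mem_iUnion, Set.mem_Icc]
      constructor
      · rintro ⟨hxc, hxT⟩
        obtain ⟨n, hn⟩ := exists_nat_gt ((T - c) / (x - c))
        refine ⟨n, ?_, hxT⟩
        have hxc' : 0 < x - c := by linarith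
        have h2 : (T - c) / (x - c) < (n:ℝ) + 2 := by
          have : (n:ℝ) ≤ (n:ℝ) + 2 := by linarith
          linarith
        have h3 := (div_lt_iff₀ hxc').mp h2
        have hn2 : (0:ℝ) < (n:ℝ) + 2 := by positivity
        have : (T - c) / ((n:ℝ) + 2) ≤ x - c := by
          rw [div_le_iff₀ hn2]; nlinarith
        linarith
      · rintro ⟨n, hx1, hx2⟩
        have hn2 : (0:ℝ) < (n:ℝ) + 2 := by positivity
        have : 0 < (T - c) / ((n:ℝ) + 2) := div_pos (by linarith) hn2
        exact ⟨by linarith, hx2⟩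
    have hIoc : IntegrableOn g (Set.Ioc c T) := by
      refine my_union_int g (fun n => Set.Icc (c + (T - c) / (n + 2)) T) _ hseq2
        (fun n => ?_) (a + b * ‖Y0‖) measurableSet_Ioc measure_Ioc_lt_top (fun x hx => ?_)
      · 
        have hn2 : (0:ℝ) < (n:ℝ) + 2 := by positivity
        have hpos : 0 < (T - c) / ((n:ℝ) + 2) := div_pos (by linarith) hn2
        have hle : (T - c) / ((n:ℝ) + 2) ≤ T - c := by
          rw [div_le_iff₀ hn2]
          nlinarith [mul_nonneg (sub_nonneg.mpr hclt.le) (by positivity : (0:ℝ) ≤ (n:ℝ) + 1)]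
        have h0sn : (0:ℝ) ≤ c + (T - c) / ((n:ℝ) + 2) := by linarith
        have hsnT : c + (T - c) / ((n:ℝ) + 2) ≤ T := by linarith
        have hsub : Set.Icc (c + (T - c) / ((n:ℝ) + 2)) T ⊆ Set.Ioc c T := fun x hx =>
          ⟨by linarith [hx.1], hx.2⟩
        have hYc : ContinuousOn Y (Set.Icc (c + (T - c) / ((n:ℝ) + 2)) T) :=
          continuousOn_const.congr (fun x hx => hconst x (hsub hx))
        exact hint _ T h0sn hsnT le_rfl hYc
      · have h1 := hbound x ⟨hc0.trans hx.1.le, hx.2⟩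
        rw [hconst x hx] at h1
        exact h1
    have hTS : T ∈ S := by
      refine ⟨⟨hT.le, le_rfl⟩, ?_⟩
      rw [← Set.Icc_union_Ioc_eq_Icc hc0 hcT]
      exact hIcc0c.union hIoc
    exact absurd (le_csSup hbdd hTS) (not_le.mpr hclt)
  rw [← hceq]
  exact hIcc0c

lemma my_recon {d : ℕ} (L : EuclideanSpace ℝ (Fin d) →L[ℝ] EuclideanSpace ℝ (Fin d)) :
    ∑ i : Fin d, (ContinuousLinearMap.smulRightL ℝ (EuclideanSpace ℝ (Fin d))
        (EuclideanSpace ℝ (Fin d)) (innerSL ℝ ((EuclideanSpace.basisFun (Fin d) ℝ) i)))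
      (L ((EuclideanSpace.basisFun (Fin d) ℝ) i)) = L := by
  set b := EuclideanSpace.basisFun (Fin d) ℝ with hb
  refine ContinuousLinearMap.ext fun x => ?_
  have h0 : ∀ i : Fin d, (ContinuousLinearMap.smulRightL ℝ (EuclideanSpace ℝ (Fin d))
      (EuclideanSpace ℝ (Fin d)) (innerSL ℝ (b i))) (L (b i)) x
      = (innerSL ℝ (b i) x) • L (b i) := fun i => rfl
  rw [ContinuousLinearMap.sum_apply]
  simp only [h0]
  have h1 : ∀ i : Fin d, (innerSL ℝ (b i) x) • L (b i) = L ((innerSL ℝ (b i) x) • b i) :=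
    fun i => (L.map_smul _ _).symm
  simp only [h1]
  rw [← map_sum]
  congr 1
  have := b.sum_repr' x
  simpa using this

lemma my_A_meas {d : ℕ} (T : ℝ)
    (v : EuclideanSpace ℝ (Fin d) → ℝ → EuclideanSpace ℝ (Fin d))
    (hv : Continuous fun p : EuclideanSpace ℝ (Fin d) × ℝ => v p.1 p.2)
    (hvdiff : ∀ τ ∈ Set.Icc (0:ℝ) T, ∀ x, DifferentiableAt ℝ (fun z => v z τ) x)
    (p : ℝ → EuclideanSpace ℝ (Fin d)) (hp : Continuous p) :
    AEStronglyMeasurable (fun s => fderiv ℝ (fun z => v z s) (p s))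
      (volume.restrict (Set.Icc 0 T)) := by
  set A : ℝ → EuclideanSpace ℝ (Fin d) →L[ℝ] EuclideanSpace ℝ (Fin d) :=
    fun s => fderiv ℝ (fun z => v z s) (p s) with hA
  set b := EuclideanSpace.basisFun (Fin d) ℝ with hb
  have hdir : ∀ h : EuclideanSpace ℝ (Fin d),
      StronglyMeasurable ((Set.Icc (0:ℝ) T).indicator (fun s => A s h)) := by
    intro h
    set Fn : ℕ → ℝ → EuclideanSpace ℝ (Fin d) := fun n s => (Set.Icc (0:ℝ) T).indicator
      (fun s => ((n:ℝ) + 1) • (v (p s + ((n:ℝ) + 1)⁻¹ • h) s - v (p s) s)) s with hFn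
    have hFnm : ∀ n, StronglyMeasurable (Fn n) := by
      intro n
      apply Continuous.stronglyMeasurable ?_ |>.indicator measurableSet_Icc
      have h1 : Continuous fun s => v (p s + ((n:ℝ) + 1)⁻¹ • h) s :=
        hv.comp ((by fun_prop : Continuous fun s : ℝ => p s + ((n:ℝ) + 1)⁻¹ • h).prodMk
          continuous_id)
      have h2 : Continuous fun s => v (p s) s :=
        hv.comp (hp.prodMk continuous_id)
      exact (h1.sub h2).const_smul ((n:ℝ) + 1)
    apply stronglyMeasurable_of_tendsto Filter.atTop hFnm
    rw [tendsto_pi_nhds]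
    intro s
    by_cases hs : s ∈ Set.Icc (0:ℝ) T
    · have hd : HasFDerivAt (fun z => v z s)
          (fderiv ℝ (fun z => v z s) (p s)) (p s) :=
        (hvdiff s hs (p s)).hasFDerivAt
      have hc : Filter.Tendsto (fun n : ℕ => ‖(n:ℝ) + 1‖) Filter.atTop Filter.atTop := by
        simp only [Real.norm_eq_abs]
        apply Filter.tendsto_atTop_mono (fun n : ℕ => le_abs_self _)
        exact Filter.tendsto_atTop_add_const_right _ 1 tendsto_natCast_atTop_atTop
      have hlim := hd.lim h hc
      simp only [hFn, Set.indicator_of_mem hs]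
      exact hlim
    · simp only [hFn, Set.indicator_of_notMem hs]
      exact tendsto_const_nhds
  have hop : StronglyMeasurable ((Set.Icc (0:ℝ) T).indicator A) := by
    have heqA : (Set.Icc (0:ℝ) T).indicator A = fun s => ∑ i : Fin d,
        (ContinuousLinearMap.smulRightL ℝ (EuclideanSpace ℝ (Fin d))
          (EuclideanSpace ℝ (Fin d)) (innerSL ℝ (b i)))
          (((Set.Icc (0:ℝ) T).indicator (fun s => A s (b i))) s) := by
      funext s
      by_cases hs : s ∈ Set.Icc (0:ℝ) T
      · simp only [Set.indicator_of_mem hs]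
        exact (my_recon (A s)).symm
      · simp only [Set.indicator_of_notMem hs, map_zero, Finset.sum_const_zero]
    rw [heqA]
    exact Finset.stronglyMeasurable_fun_sum _ fun i _ =>
      (ContinuousLinearMap.smulRightL ℝ (EuclideanSpace ℝ (Fin d)) (EuclideanSpace ℝ (Fin d))
        (innerSL ℝ (b i))).continuous.comp_stronglyMeasurable (hdir (b i))
  exact (hop.aestronglyMeasurable).congr (indicator_ae_eq_restrict measurableSet_Icc)


theorem gronwall_flow_gradient
    (d : ℕ) (hd : 2 ≤ d) (γ : ℝ) (hγ : γ ∈ Set.Ioo (0:ℝ) 1)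
    (q T : ℝ) (hq : 0 < q) (hT : 0 < T)
    (D₀ : Set (EuclideanSpace ℝ (Fin d))) (hD₀ : IsOpen D₀)
    (v : EuclideanSpace ℝ (Fin d) → ℝ → EuclideanSpace ℝ (Fin d))
    (hv : Continuous fun p : EuclideanSpace ℝ (Fin d) × ℝ => v p.1 p.2)
    (X : EuclideanSpace ℝ (Fin d) → ℝ → EuclideanSpace ℝ (Fin d))
    (hX : ∀ α : EuclideanSpace ℝ (Fin d), ∀ t ∈ Set.Icc (0:ℝ) T,
      X α t = α + ∫ τ in (0:ℝ)..t, v (X α τ) τ)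
    (hvdiff : ∀ τ ∈ Set.Icc (0:ℝ) T, ∀ x, DifferentiableAt ℝ (fun z => v z τ) x)
    (hvq : ∀ τ ∈ Set.Icc (0:ℝ) T, ∀ x, ‖fderiv ℝ (fun z => v z τ) x‖ ≤ q)
    (hvhold : ∀ τ ∈ Set.Icc (0:ℝ) T,
      ∀ x₁ ∈ (fun α => X α τ) '' D₀, ∀ x₂ ∈ (fun α => X α τ) '' D₀,
        ‖fderiv ℝ (fun z => v z τ) x₁ - fderiv ℝ (fun z => v z τ) x₂‖
          ≤ q * ‖x₁ - x₂‖ ^ γ)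
    (hXdiff : ∀ τ ∈ Set.Icc (0:ℝ) T, ∀ α ∈ D₀, DifferentiableAt ℝ (fun β => X β τ) α)
    (hXint : ∀ α ∈ D₀, ∀ t ∈ Set.Icc (0:ℝ) T,
      fderiv ℝ (fun β => X β t) α
        = ContinuousLinearMap.id ℝ (EuclideanSpace ℝ (Fin d))
          + ∫ τ in (0:ℝ)..t,
              (fderiv ℝ (fun z => v z τ) (X α τ)).comp (fderiv ℝ (fun β => X β τ) α)) :
    ∀ α ∈ D₀, ∀ β ∈ D₀, ∀ t ∈ Set.Icc (0:ℝ) T,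
      ‖fderiv ℝ (fun b => X b t) α‖ ≤ Real.exp (q * t) ∧
      ‖fderiv ℝ (fun b => X b t) α - fderiv ℝ (fun b => X b t) β‖
        ≤ (1 / γ) * Real.exp (q * (γ + 1) * t) * ‖α - β‖ ^ γ := by
  -- Lipschitz bound for v
  have hvlip : ∀ τ ∈ Set.Icc (0:ℝ) T, ∀ x y : EuclideanSpace ℝ (Fin d),
      ‖v x τ - v y τ‖ ≤ q * ‖x - y‖ := by
    intro τ hτ x y
    exact (convex_univ (𝕜 := ℝ)).norm_image_sub_le_of_norm_fderiv_le
      (fun z _ => hvdiff τ hτ z) (fun z _ => hvq τ hτ z) (Set.mem_univ y) (Set.mem_univ x)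
  -- bound for ‖v 0 τ‖
  obtain ⟨τ₀, hτ₀, hM⟩ := IsCompact.exists_isMaxOn (isCompact_Icc (a := (0:ℝ)) (b := T))
    (Set.nonempty_Icc.mpr hT.le)
    ((hv.comp (continuous_const.prodMk continuous_id)).norm.continuousOn
      (s := Set.Icc 0 T))
  set M : ℝ := ‖v 0 τ₀‖ with hMdef
  have hM0 : 0 ≤ M := norm_nonneg _
  have hMb : ∀ τ ∈ Set.Icc (0:ℝ) T, ‖v 0 τ‖ ≤ M := fun τ hτ => hM hτ
  have hvaff : ∀ τ ∈ Set.Icc (0:ℝ) T, ∀ x : EuclideanSpace ℝ (Fin d),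
      ‖v x τ‖ ≤ M + q * ‖x‖ := by
    intro τ hτ x
    have h1 : ‖v x τ‖ ≤ ‖v x τ - v 0 τ‖ + ‖v 0 τ‖ := by
      simpa using norm_add_le (v x τ - v 0 τ) (v 0 τ)
    have h2 := hvlip τ hτ x 0
    have h3 := hMb τ hτ
    simp only [sub_zero] at h2
    linarith
  -- Step A : integrability along trajectories and continuity of trajectories
  have hXA : ∀ α : EuclideanSpace ℝ (Fin d),
      IntegrableOn (fun τ => v (X α τ) τ) (Set.Icc 0 T) := by
    intro α
    apply my_boot T M q hT hM0 hq.le (X α) _ α (hX α)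
    · intro s hs
      exact hvaff s hs (X α s)
    · intro s t hs hst htT hc
      have hgc : ContinuousOn (fun τ => v (X α τ) τ) (Set.Icc s t) := by
        have : ContinuousOn (fun τ : ℝ => (X α τ, τ)) (Set.Icc s t) :=
          hc.prodMk continuousOn_id
        exact hv.comp_continuousOn this
      exact hgc.integrableOn_compact isCompact_Icc
  have hXcont : ∀ α : EuclideanSpace ℝ (Fin d), ContinuousOn (X α) (Set.Icc 0 T) := by
    intro α
    have hII : IntervalIntegrable (fun τ => v (X α τ) τ) volume 0 T :=
      (intervalIntegrable_iff_integrableOn_Icc_of_le hT.le).mpr (hXA α)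
    have hprim := intervalIntegral.continuousOn_primitive_interval' hII
      (Set.left_mem_uIcc (a := (0:ℝ)) (b := T))
    rw [Set.uIcc_of_le hT.le] at hprim
    exact (continuousOn_const.add hprim).congr (fun s hs => hX α s hs)
  -- Step B : Lipschitz dependence on initial data
  have hXlip : ∀ α β : EuclideanSpace ℝ (Fin d), ∀ t ∈ Set.Icc (0:ℝ) T,
      ‖X α t - X β t‖ ≤ Real.exp (q * t) * ‖α - β‖ := by
    intro α β t ht
    have hsub : Set.Icc (0:ℝ) t ⊆ Set.Icc 0 T := Set.Icc_subset_Icc_right ht.2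
    have hucont : ContinuousOn (fun s => ‖X α s - X β s‖) (Set.Icc 0 t) :=
      (((hXcont α).mono hsub).sub ((hXcont β).mono hsub)).norm
    have hIIa : ∀ r, r ∈ Set.Icc (0:ℝ) T → IntervalIntegrable (fun τ => v (X α τ) τ) volume 0 r :=
      fun r hr => (intervalIntegrable_iff_integrableOn_Icc_of_le hr.1).mpr
        ((hXA α).mono_set (Set.Icc_subset_Icc_right hr.2))
    have hIIb : ∀ r, r ∈ Set.Icc (0:ℝ) T → IntervalIntegrable (fun τ => v (X β τ) τ) volume 0 r :=
      fun r hr => (intervalIntegrable_iff_integrableOn_Icc_of_le hr.1).mpr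
        ((hXA β).mono_set (Set.Icc_subset_Icc_right hr.2))
    have hkey : ∀ s ∈ Set.Icc (0:ℝ) t, ‖X α s - X β s‖ ≤ ‖α - β‖
        + ∫ r in (0:ℝ)..s, (q * ‖X α r - X β r‖ + (fun _ : ℝ => (0:ℝ)) r) := by
      intro s hs
      have hsT : s ∈ Set.Icc (0:ℝ) T := hsub hs
      have heq : X α s - X β s = (α - β)
          + ∫ r in (0:ℝ)..s, (v (X α r) r - v (X β r) r) := by
        rw [hX α s hsT, hX β s hsT,
          intervalIntegral.integral_sub (hIIa s hsT) (hIIb s hsT)]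
        abel
      have h1 : ‖X α s - X β s‖ ≤ ‖α - β‖
          + ‖∫ r in (0:ℝ)..s, (v (X α r) r - v (X β r) r)‖ := by
        rw [heq]; exact norm_add_le _ _
      have h2 : ‖∫ r in (0:ℝ)..s, (v (X α r) r - v (X β r) r)‖
          ≤ ∫ r in (0:ℝ)..s, ‖v (X α r) r - v (X β r) r‖ :=
        intervalIntegral.norm_integral_le_integral_norm hs.1
      have h3 : (∫ r in (0:ℝ)..s, ‖v (X α r) r - v (X β r) r‖)
          ≤ ∫ r in (0:ℝ)..s, (q * ‖X α r - X β r‖ + (fun _ : ℝ => (0:ℝ)) r) := by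
        apply intervalIntegral.integral_mono_on hs.1
        · exact ((hIIa s hsT).sub (hIIb s hsT)).norm
        · apply ContinuousOn.intervalIntegrable
          rw [Set.uIcc_of_le hs.1]
          exact (continuousOn_const.mul
            (hucont.mono (Set.Icc_subset_Icc_right hs.2))).add continuousOn_const
        · intro r hr
          have hrT : r ∈ Set.Icc (0:ℝ) T := ⟨hr.1, (hr.2.trans hs.2).trans ht.2⟩
          have hb := hvlip r hrT (X α r) (X β r)
          simpa using hb
      linarith
    have hgr := my_gronOn q ‖α - β‖ hq.le (fun s => ‖X α s - X β s‖)
      (fun _ => (0:ℝ)) t ht.1 hucont continuous_const hkey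
    simpa using hgr
  -- Step C : measurability of s ↦ ∇v(X α s)
  have hAmeas : ∀ α : EuclideanSpace ℝ (Fin d),
      AEStronglyMeasurable (fun s => fderiv ℝ (fun z => v z s) (X α s))
        (volume.restrict (Set.Icc 0 T)) := by
    intro α
    have hproj : Continuous fun s : ℝ => max 0 (min s T) := by fun_prop
    have hmem : ∀ s : ℝ, max 0 (min s T) ∈ Set.Icc (0:ℝ) T := fun s =>
      ⟨le_max_left _ _, max_le hT.le (min_le_right _ _)⟩
    have hp : Continuous fun s : ℝ => X α (max 0 (min s T)) :=
      (hXcont α).comp_continuous hproj hmem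
    have h0 := my_A_meas T v hv hvdiff _ hp
    apply h0.congr
    apply (ae_restrict_iff' measurableSet_Icc).mpr
    apply Filter.Eventually.of_forall
    intro s hs
    have hss : max 0 (min s T) = s := by
      rw [min_eq_left hs.2, max_eq_right hs.1]
    show fderiv ℝ (fun z => v z s) (X α (max 0 (min s T))) = fderiv ℝ (fun z => v z s) (X α s)
    rw [hss]
  -- Step D : integrability of the operator integrand, continuity of F
  have hFboot : ∀ α ∈ D₀,
      IntegrableOn (fun τ => (fderiv ℝ (fun z => v z τ) (X α τ)).comp
        (fderiv ℝ (fun b => X b τ) α)) (Set.Icc 0 T) := by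
    intro α hα
    apply my_boot T 0 q hT le_rfl hq.le (fun t => fderiv ℝ (fun b => X b t) α) _
      (ContinuousLinearMap.id ℝ (EuclideanSpace ℝ (Fin d))) (hXint α hα)
    · intro s hs
      have h1 : ‖(fderiv ℝ (fun z => v z s) (X α s)).comp (fderiv ℝ (fun b => X b s) α)‖
          ≤ ‖fderiv ℝ (fun z => v z s) (X α s)‖ * ‖fderiv ℝ (fun b => X b s) α‖ :=
        ContinuousLinearMap.opNorm_comp_le _ _
      have h2 := hvq s hs (X α s)
      have h3 : ‖fderiv ℝ (fun z => v z s) (X α s)‖ * ‖fderiv ℝ (fun b => X b s) α‖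
          ≤ q * ‖fderiv ℝ (fun b => X b s) α‖ :=
        mul_le_mul_of_nonneg_right h2 (norm_nonneg _)
      rw [zero_add]
      linarith
    · intro s t hs hst htT hFc
      have hA' : AEStronglyMeasurable (fun τ => fderiv ℝ (fun z => v z τ) (X α τ))
          (volume.restrict (Set.Icc s t)) :=
        (hAmeas α).mono_measure (Measure.restrict_mono (Set.Icc_subset_Icc hs htT) le_rfl)
      have hF' : AEStronglyMeasurable (fun τ => fderiv ℝ (fun b => X b τ) α)
          (volume.restrict (Set.Icc s t)) :=
        hFc.aestronglyMeasurable measurableSet_Icc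
      have hgm : AEStronglyMeasurable (fun τ => (fderiv ℝ (fun z => v z τ) (X α τ)).comp
          (fderiv ℝ (fun b => X b τ) α)) (volume.restrict (Set.Icc s t)) :=
        (isBoundedBilinearMap_comp (𝕜 := ℝ)).continuous.comp_aestronglyMeasurable
          (hA'.prodMk hF')
      obtain ⟨τ₁, hτ₁, hmax⟩ := IsCompact.exists_isMaxOn (isCompact_Icc (a := s) (b := t))
        (Set.nonempty_Icc.mpr hst) hFc.norm
      apply Integrable.mono' (g := fun _ => q * ‖fderiv ℝ (fun b => X b τ₁) α‖)
        ((integrableOn_const_iff (C := q * ‖fderiv ℝ (fun b => X b τ₁) α‖)).mpr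
          (Or.inr measure_Icc_lt_top)) hgm
      apply (ae_restrict_iff' measurableSet_Icc).mpr
      apply Filter.Eventually.of_forall
      intro x hx
      have h1 : ‖(fderiv ℝ (fun z => v z x) (X α x)).comp (fderiv ℝ (fun b => X b x) α)‖
          ≤ ‖fderiv ℝ (fun z => v z x) (X α x)‖ * ‖fderiv ℝ (fun b => X b x) α‖ :=
        ContinuousLinearMap.opNorm_comp_le _ _
      have h2 : ‖fderiv ℝ (fun z => v z x) (X α x)‖ * ‖fderiv ℝ (fun b => X b x) α‖
          ≤ q * ‖fderiv ℝ (fun b => X b x) α‖ :=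
        mul_le_mul_of_nonneg_right (hvq x ⟨hs.trans hx.1, hx.2.trans htT⟩ (X α x))
          (norm_nonneg _)
      have h3 : ‖fderiv ℝ (fun b => X b x) α‖ ≤ ‖fderiv ℝ (fun b => X b τ₁) α‖ := hmax hx
      have h4 : q * ‖fderiv ℝ (fun b => X b x) α‖ ≤ q * ‖fderiv ℝ (fun b => X b τ₁) α‖ :=
        mul_le_mul_of_nonneg_left h3 hq.le
      linarith
  have hFII : ∀ α ∈ D₀, ∀ r ∈ Set.Icc (0:ℝ) T,
      IntervalIntegrable (fun τ => (fderiv ℝ (fun z => v z τ) (X α τ)).comp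
        (fderiv ℝ (fun b => X b τ) α)) volume 0 r :=
    fun α hα r hr => (intervalIntegrable_iff_integrableOn_Icc_of_le hr.1).mpr
      ((hFboot α hα).mono_set (Set.Icc_subset_Icc_right hr.2))
  have hFcont : ∀ α ∈ D₀, ContinuousOn (fun t => fderiv ℝ (fun b => X b t) α)
      (Set.Icc 0 T) := by
    intro α hα
    have hprim := intervalIntegral.continuousOn_primitive_interval'
      (hFII α hα T ⟨hT.le, le_rfl⟩) (Set.left_mem_uIcc (a := (0:ℝ)) (b := T))
    rw [Set.uIcc_of_le hT.le] at hprim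
    exact (continuousOn_const.add hprim).congr (fun s hs => hXint α hα s hs)
  -- Step E : exponential bound on the gradient
  have hFnorm : ∀ α ∈ D₀, ∀ t ∈ Set.Icc (0:ℝ) T,
      ‖fderiv ℝ (fun b => X b t) α‖ ≤ Real.exp (q * t) := by
    intro α hα t ht
    have hsub : Set.Icc (0:ℝ) t ⊆ Set.Icc 0 T := Set.Icc_subset_Icc_right ht.2
    have hucont : ContinuousOn (fun s => ‖fderiv ℝ (fun b => X b s) α‖) (Set.Icc 0 t) :=
      ((hFcont α hα).mono hsub).norm
    have hkey : ∀ s ∈ Set.Icc (0:ℝ) t, ‖fderiv ℝ (fun b => X b s) α‖ ≤ 1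
        + ∫ r in (0:ℝ)..s, (q * ‖fderiv ℝ (fun b => X b r) α‖ + (fun _ : ℝ => (0:ℝ)) r) := by
      intro s hs
      have hsT : s ∈ Set.Icc (0:ℝ) T := hsub hs
      have h1 : ‖fderiv ℝ (fun b => X b s) α‖
          ≤ ‖ContinuousLinearMap.id ℝ (EuclideanSpace ℝ (Fin d))‖
            + ‖∫ τ in (0:ℝ)..s, (fderiv ℝ (fun z => v z τ) (X α τ)).comp
                (fderiv ℝ (fun b => X b τ) α)‖ := by
        rw [hXint α hα s hsT]; exact norm_add_le _ _
      have h1' : ‖ContinuousLinearMap.id ℝ (EuclideanSpace ℝ (Fin d))‖ ≤ 1 :=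
        ContinuousLinearMap.norm_id_le (𝕜 := ℝ) (E := EuclideanSpace ℝ (Fin d))
      have h2 : ‖∫ τ in (0:ℝ)..s, (fderiv ℝ (fun z => v z τ) (X α τ)).comp
            (fderiv ℝ (fun b => X b τ) α)‖
          ≤ ∫ τ in (0:ℝ)..s, ‖(fderiv ℝ (fun z => v z τ) (X α τ)).comp
            (fderiv ℝ (fun b => X b τ) α)‖ :=
        intervalIntegral.norm_integral_le_integral_norm hs.1
      have h3 : (∫ τ in (0:ℝ)..s, ‖(fderiv ℝ (fun z => v z τ) (X α τ)).comp
            (fderiv ℝ (fun b => X b τ) α)‖)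
          ≤ ∫ r in (0:ℝ)..s, (q * ‖fderiv ℝ (fun b => X b r) α‖ + (fun _ : ℝ => (0:ℝ)) r) := by
        apply intervalIntegral.integral_mono_on hs.1
        · exact (hFII α hα s hsT).norm
        · apply ContinuousOn.intervalIntegrable
          rw [Set.uIcc_of_le hs.1]
          exact (continuousOn_const.mul
            (hucont.mono (Set.Icc_subset_Icc_right hs.2))).add continuousOn_const
        · intro r hr
          have hrT : r ∈ Set.Icc (0:ℝ) T := ⟨hr.1, (hr.2.trans hs.2).trans ht.2⟩
          have ha1 : ‖(fderiv ℝ (fun z => v z r) (X α r)).comp (fderiv ℝ (fun b => X b r) α)‖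
              ≤ ‖fderiv ℝ (fun z => v z r) (X α r)‖ * ‖fderiv ℝ (fun b => X b r) α‖ :=
            ContinuousLinearMap.opNorm_comp_le _ _
          have ha2 : ‖fderiv ℝ (fun z => v z r) (X α r)‖ * ‖fderiv ℝ (fun b => X b r) α‖
              ≤ q * ‖fderiv ℝ (fun b => X b r) α‖ :=
            mul_le_mul_of_nonneg_right (hvq r hrT (X α r)) (norm_nonneg _)
          simp only [add_zero]
          linarith
      linarith
    have hgr := my_gronOn q 1 hq.le (fun s => ‖fderiv ℝ (fun b => X b s) α‖)
      (fun _ => (0:ℝ)) t ht.1 hucont continuous_const hkey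
    have hz : (∫ s in (0:ℝ)..t, Real.exp (-(q * s)) * (fun _ : ℝ => (0:ℝ)) s) = 0 := by
      simp
    rw [hz, add_zero, mul_one] at hgr
    exact hgr
  -- integral of the exponential
  have hexpint : ∀ c r : ℝ, 0 < c → (∫ s in (0:ℝ)..r, Real.exp (c * s))
      = (Real.exp (c * r) - 1) / c := by
    intro c r hc
    have hder : ∀ x ∈ Set.uIcc (0:ℝ) r, HasDerivAt (fun s => Real.exp (c * s) / c)
        (Real.exp (c * x)) x := by
      intro x _
      have h1 : HasDerivAt (fun s : ℝ => c * s) c x := by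
        simpa using (hasDerivAt_id x).const_mul c
      have h2 := h1.exp.div_const c
      have h3 : Real.exp (c * x) * c / c = Real.exp (c * x) := by
        field_simp
      rwa [h3] at h2
    have hieq := intervalIntegral.integral_eq_sub_of_hasDerivAt hder
      ((Real.continuous_exp.comp (continuous_const.mul continuous_id)).intervalIntegrable 0 r)
    rw [hieq]
    rw [mul_zero, Real.exp_zero, sub_div]
  -- final statement
  intro α hα β hβ t ht
  refine ⟨hFnorm α hα t ht, ?_⟩
  have hδ0 : (0:ℝ) ≤ ‖α - β‖ ^ γ := Real.rpow_nonneg (norm_nonneg _) γ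
  have hsub : Set.Icc (0:ℝ) t ⊆ Set.Icc 0 T := Set.Icc_subset_Icc_right ht.2
  have hucont : ContinuousOn
      (fun s => ‖fderiv ℝ (fun b => X b s) α - fderiv ℝ (fun b => X b s) β‖)
      (Set.Icc 0 t) :=
    (((hFcont α hα).mono hsub).sub ((hFcont β hβ).mono hsub)).norm
  have hfc : Continuous (fun r : ℝ => q * ‖α - β‖ ^ γ * Real.exp (q * (γ + 1) * r)) := by
    fun_prop
  have hkey : ∀ s ∈ Set.Icc (0:ℝ) t,
      ‖fderiv ℝ (fun b => X b s) α - fderiv ℝ (fun b => X b s) β‖ ≤ 0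
        + ∫ r in (0:ℝ)..s, (q * ‖fderiv ℝ (fun b => X b r) α - fderiv ℝ (fun b => X b r) β‖
            + (fun r : ℝ => q * ‖α - β‖ ^ γ * Real.exp (q * (γ + 1) * r)) r) := by
    intro s hs
    have hsT : s ∈ Set.Icc (0:ℝ) T := hsub hs
    have heq2 : fderiv ℝ (fun b => X b s) α - fderiv ℝ (fun b => X b s) β
        = ∫ r in (0:ℝ)..s,
            ((fderiv ℝ (fun z => v z r) (X α r)).comp (fderiv ℝ (fun b => X b r) α)
              - (fderiv ℝ (fun z => v z r) (X β r)).comp (fderiv ℝ (fun b => X b r) β)) := by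
      rw [hXint α hα s hsT, hXint β hβ s hsT,
        intervalIntegral.integral_sub (hFII α hα s hsT) (hFII β hβ s hsT)]
      abel
    have h2 : ‖fderiv ℝ (fun b => X b s) α - fderiv ℝ (fun b => X b s) β‖
        ≤ ∫ r in (0:ℝ)..s,
            ‖(fderiv ℝ (fun z => v z r) (X α r)).comp (fderiv ℝ (fun b => X b r) α)
              - (fderiv ℝ (fun z => v z r) (X β r)).comp (fderiv ℝ (fun b => X b r) β)‖ := by
      rw [heq2]
      exact intervalIntegral.norm_integral_le_integral_norm hs.1
    have h3 : (∫ r in (0:ℝ)..s,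
          ‖(fderiv ℝ (fun z => v z r) (X α r)).comp (fderiv ℝ (fun b => X b r) α)
            - (fderiv ℝ (fun z => v z r) (X β r)).comp (fderiv ℝ (fun b => X b r) β)‖)
        ≤ ∫ r in (0:ℝ)..s, (q * ‖fderiv ℝ (fun b => X b r) α - fderiv ℝ (fun b => X b r) β‖
            + (fun r : ℝ => q * ‖α - β‖ ^ γ * Real.exp (q * (γ + 1) * r)) r) := by
      apply intervalIntegral.integral_mono_on hs.1
      · exact ((hFII α hα s hsT).sub (hFII β hβ s hsT)).norm
      · apply ContinuousOn.intervalIntegrable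
        rw [Set.uIcc_of_le hs.1]
        exact (continuousOn_const.mul
          (hucont.mono (Set.Icc_subset_Icc_right hs.2))).add hfc.continuousOn
      · intro r hr
        have hrT : r ∈ Set.Icc (0:ℝ) T := ⟨hr.1, (hr.2.trans hs.2).trans ht.2⟩
        have hsplit : (fderiv ℝ (fun z => v z r) (X α r)).comp (fderiv ℝ (fun b => X b r) α)
              - (fderiv ℝ (fun z => v z r) (X β r)).comp (fderiv ℝ (fun b => X b r) β)
            = (fderiv ℝ (fun z => v z r) (X α r)).comp
                (fderiv ℝ (fun b => X b r) α - fderiv ℝ (fun b => X b r) β)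
              + (fderiv ℝ (fun z => v z r) (X α r)
                  - fderiv ℝ (fun z => v z r) (X β r)).comp (fderiv ℝ (fun b => X b r) β) := by
          rw [ContinuousLinearMap.comp_sub, ContinuousLinearMap.sub_comp]
          abel
        have hn1 : ‖(fderiv ℝ (fun z => v z r) (X α r)).comp
              (fderiv ℝ (fun b => X b r) α - fderiv ℝ (fun b => X b r) β)‖
            ≤ q * ‖fderiv ℝ (fun b => X b r) α - fderiv ℝ (fun b => X b r) β‖ :=
          le_trans (ContinuousLinearMap.opNorm_comp_le _ _)
            (mul_le_mul_of_nonneg_right (hvq r hrT (X α r)) (norm_nonneg _))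
        have hhold := hvhold r hrT (X α r) ⟨α, hα, rfl⟩ (X β r) ⟨β, hβ, rfl⟩
        have hXl := hXlip α β r hrT
        have hrp : ‖X α r - X β r‖ ^ γ ≤ (Real.exp (q * r) * ‖α - β‖) ^ γ :=
          Real.rpow_le_rpow (norm_nonneg _) hXl hγ.1.le
        have hmul : (Real.exp (q * r) * ‖α - β‖) ^ γ
            = Real.exp (q * r) ^ γ * ‖α - β‖ ^ γ :=
          Real.mul_rpow (Real.exp_nonneg _) (norm_nonneg _)
        have hexp : Real.exp (q * r) ^ γ = Real.exp (q * r * γ) :=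
          (Real.exp_mul (q * r) γ).symm
        have hFβ : ‖fderiv ℝ (fun b => X b r) β‖ ≤ Real.exp (q * r) := hFnorm β hβ r hrT
        have hn2 : ‖(fderiv ℝ (fun z => v z r) (X α r)
              - fderiv ℝ (fun z => v z r) (X β r)).comp (fderiv ℝ (fun b => X b r) β)‖
            ≤ q * (Real.exp (q * r * γ) * ‖α - β‖ ^ γ) * Real.exp (q * r) := by
          refine le_trans (ContinuousLinearMap.opNorm_comp_le _ _) ?_
          have hA : ‖fderiv ℝ (fun z => v z r) (X α r) - fderiv ℝ (fun z => v z r) (X β r)‖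
              ≤ q * (Real.exp (q * r * γ) * ‖α - β‖ ^ γ) := by
            refine hhold.trans ?_
            rw [mul_le_mul_iff_of_pos_left hq]
            calc ‖X α r - X β r‖ ^ γ ≤ (Real.exp (q * r) * ‖α - β‖) ^ γ := hrp
              _ = Real.exp (q * r * γ) * ‖α - β‖ ^ γ := by rw [hmul, hexp]
          calc ‖fderiv ℝ (fun z => v z r) (X α r) - fderiv ℝ (fun z => v z r) (X β r)‖
                * ‖fderiv ℝ (fun b => X b r) β‖
              ≤ (q * (Real.exp (q * r * γ) * ‖α - β‖ ^ γ)) * Real.exp (q * r) := by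
                apply mul_le_mul hA hFβ (norm_nonneg _)
                positivity
            _ = q * (Real.exp (q * r * γ) * ‖α - β‖ ^ γ) * Real.exp (q * r) := rfl
        have hexp2 : Real.exp (q * r * γ) * Real.exp (q * r) = Real.exp (q * (γ + 1) * r) := by
          rw [← Real.exp_add]
          ring_nf
        calc ‖(fderiv ℝ (fun z => v z r) (X α r)).comp (fderiv ℝ (fun b => X b r) α)
              - (fderiv ℝ (fun z => v z r) (X β r)).comp (fderiv ℝ (fun b => X b r) β)‖
            ≤ ‖(fderiv ℝ (fun z => v z r) (X α r)).comp
                (fderiv ℝ (fun b => X b r) α - fderiv ℝ (fun b => X b r) β)‖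
              + ‖(fderiv ℝ (fun z => v z r) (X α r)
                  - fderiv ℝ (fun z => v z r) (X β r)).comp (fderiv ℝ (fun b => X b r) β)‖ := by
              rw [hsplit]; exact norm_add_le _ _
          _ ≤ q * ‖fderiv ℝ (fun b => X b r) α - fderiv ℝ (fun b => X b r) β‖
              + q * ‖α - β‖ ^ γ * Real.exp (q * (γ + 1) * r) := by
              have : q * (Real.exp (q * r * γ) * ‖α - β‖ ^ γ) * Real.exp (q * r)
                  = q * ‖α - β‖ ^ γ * (Real.exp (q * r * γ) * Real.exp (q * r)) := by ring
              rw [this, hexp2] at hn2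
              linarith
    linarith
  have hgr := my_gronOn q 0 hq.le
    (fun s => ‖fderiv ℝ (fun b => X b s) α - fderiv ℝ (fun b => X b s) β‖)
    (fun r : ℝ => q * ‖α - β‖ ^ γ * Real.exp (q * (γ + 1) * r)) t ht.1 hucont hfc hkey
  have hγq : 0 < q * γ := mul_pos hq hγ.1
  have hfint : (∫ s in (0:ℝ)..t, Real.exp (-(q * s))
        * (fun r : ℝ => q * ‖α - β‖ ^ γ * Real.exp (q * (γ + 1) * r)) s)
      = q * ‖α - β‖ ^ γ * ((Real.exp (q * γ * t) - 1) / (q * γ)) := by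
    have hptw : ∀ s : ℝ, Real.exp (-(q * s))
          * (q * ‖α - β‖ ^ γ * Real.exp (q * (γ + 1) * s))
        = q * ‖α - β‖ ^ γ * Real.exp (q * γ * s) := by
      intro s
      rw [show q * ‖α - β‖ ^ γ * Real.exp (q * γ * s)
          = q * ‖α - β‖ ^ γ * (Real.exp (-(q * s)) * Real.exp (q * (γ + 1) * s)) by
        rw [← Real.exp_add]; ring_nf]
      ring
    simp only [hptw]
    rw [intervalIntegral.integral_const_mul, hexpint (q * γ) t hγq]
  rw [hfint, zero_add] at hgr
  refine hgr.trans ?_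
  have hAB : Real.exp (q * (γ + 1) * t) = Real.exp (q * t) * Real.exp (q * γ * t) := by
    rw [← Real.exp_add]; ring_nf
  have hq1 : q * ‖α - β‖ ^ γ * ((Real.exp (q * γ * t) - 1) / (q * γ))
      = ‖α - β‖ ^ γ * (Real.exp (q * γ * t) - 1) / γ := by
    have hγne : γ ≠ 0 := ne_of_gt hγ.1
    have hqne : q ≠ 0 := ne_of_gt hq
    field_simp
  rw [hq1, hAB]
  rw [show Real.exp (q * t) * (‖α - β‖ ^ γ * (Real.exp (q * γ * t) - 1) / γ)
      = Real.exp (q * t) * ‖α - β‖ ^ γ * (Real.exp (q * γ * t) - 1) / γ by ring]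
  rw [show (1 / γ) * (Real.exp (q * t) * Real.exp (q * γ * t)) * ‖α - β‖ ^ γ
      = Real.exp (q * t) * ‖α - β‖ ^ γ * Real.exp (q * γ * t) / γ by ring]
  rw [div_le_div_iff_of_pos_right hγ.1]
  nlinarith [mul_nonneg (Real.exp_nonneg (q * t)) hδ0]
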